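/- Let Φ be a Bernstein function with Lévy measure Π (no drift, no killing), and let f ∈ 𝒮(ℝ). Then the Fourier transform of the left Marchaud-type derivative D₋^Φ f(x) = ∫₀^∞ (f(x) − f(x−y)) Π(dy) equals Φ(iξ) f̂(ξ), and the Fourier transform of the right Marchaud-type derivative D₊^Φ f(x) = ∫₀^∞ (f(x) − f(x+y)) Π(dy) equals Φ(−iξ) f̂(ξ), where Φ is extended to the complex half-plane Re(z) ≥ 0 by Φ(z) = ∫₀^∞ (1 − e^{−zy}) Π(dy). -/

import Mathlib

open MeasureTheory Set

private lemma fm_deriv_bound (f : SchwartzMap ℝ ℂ) :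
    ∃ C : ℝ, 0 < C ∧ ∀ x : ℝ, ‖deriv f x‖ ≤ C / (1 + x ^ 2) := by
  obtain ⟨C0, hC0pos, hC0⟩ := (SchwartzMap.derivCLM ℝ ℂ f).decay 0 0
  obtain ⟨C2, hC2pos, hC2⟩ := (SchwartzMap.derivCLM ℝ ℂ f).decay 2 0
  refine ⟨C0 + C2, by positivity, fun x => ?_⟩
  have h0 := hC0 x
  have h2 := hC2 x
  simp only [norm_iteratedFDeriv_zero, SchwartzMap.derivCLM_apply, pow_zero, one_mul,
    Real.norm_eq_abs, sq_abs] at h0 h2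
  rw [le_div_iff₀ (by positivity)]
  nlinarith [norm_nonneg (deriv f x), sq_nonneg x]

private lemma fm_mvt_bound (f : SchwartzMap ℝ ℂ) {C : ℝ} (hC : 0 < C)
    (hd : ∀ x : ℝ, ‖deriv f x‖ ≤ C / (1 + x ^ 2)) (x : ℝ) {a : ℝ} (ha : |a| ≤ 1) :
    ‖f x - f (x - a)‖ ≤ 3 * C / (1 + x ^ 2) * |a| := by
  have key : ∀ t ∈ Metric.closedBall x 1, ‖deriv f t‖ ≤ 3 * C / (1 + x ^ 2) := by
    intro t ht
    rw [Metric.mem_closedBall, Real.dist_eq] at ht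
    refine (hd t).trans ?_
    rw [div_le_div_iff₀ (by positivity) (by positivity)]
    have h1 : (t - x) ^ 2 ≤ 1 := by nlinarith [abs_le.mp ht]
    have h2 : (0:ℝ) ≤ 2 + 2 * t ^ 2 - x ^ 2 := by nlinarith [sq_nonneg (x - 2 * t)]
    nlinarith [mul_nonneg hC.le h2]
  have := Convex.norm_image_sub_le_of_norm_deriv_le
    (f := (f : ℝ → ℂ)) (s := Metric.closedBall x 1)
    (fun t _ => f.differentiableAt) key (convex_closedBall x 1)
    (y := x) (x := x - a) ?_ ?_
  · simpa [Real.norm_eq_abs, abs_sub_comm] using this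
  · simp [Metric.mem_closedBall, Real.dist_eq, abs_sub_comm, ha]
  · simp [Metric.mem_closedBall]

private lemma fm_sigmaFinite (Lev : Measure ℝ)
    (hLev : IntegrableOn (fun z => min 1 z) (Ioi 0) Lev) :
    SigmaFinite (Lev.restrict (Ioi 0)) := by
  have hfin : ∀ n : ℕ, Lev.restrict (Ioi 0) (Ioi (1 / (n + 1) : ℝ)) < ⊤ := by
    intro n
    have hc : (0:ℝ) < min (1:ℝ) (1 / (n + 1)) :=
      lt_min one_pos (one_div_pos.mpr (Nat.cast_add_one_pos n))
    have h1 := hLev.measure_ge_lt_top hc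
    refine lt_of_le_of_lt (measure_mono ?_) h1
    intro z hz
    simp only [mem_setOf_eq]
    exact min_le_min le_rfl (le_of_lt hz)
  refine ⟨⟨⟨fun n => Ioi (1 / (n + 1) : ℝ) ∪ Iic 0, fun _ => trivial, fun n => ?_, ?_⟩⟩⟩
  · refine lt_of_le_of_lt (measure_union_le _ _) (ENNReal.add_lt_top.mpr ⟨hfin n, ?_⟩)
    rw [Measure.restrict_apply measurableSet_Iic, Set.Iic_inter_Ioi, Set.Ioc_self,
      measure_empty]
    exact ENNReal.zero_lt_top
  · ext x
    simp only [mem_iUnion, mem_union, mem_Ioi, mem_Iic, mem_univ, iff_true]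
    rcases le_or_gt x 0 with h | h
    · exact ⟨0, Or.inr h⟩
    · obtain ⟨n, hn⟩ := exists_nat_one_div_lt h
      exact ⟨n, Or.inl hn⟩

private lemma fm_aux (Lev : Measure ℝ)
    (hLev : IntegrableOn (fun z => min 1 z) (Ioi 0) Lev)
    (f : SchwartzMap ℝ ℂ) (ξ ε : ℝ) (hε : |ε| = 1) :
    ∫ x : ℝ, Complex.exp (-(Complex.I * ξ * x)) *
        (∫ y in Ioi (0:ℝ), (f x - f (x - ε * y)) ∂Lev) =
      (∫ y in Ioi (0:ℝ), (1 - Complex.exp (-(Complex.I * ξ * (ε * y)))) ∂Lev) *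
        ∫ x : ℝ, Complex.exp (-(Complex.I * ξ * x)) * f x := by
  haveI := fm_sigmaFinite Lev hLev
  set μ := Lev.restrict (Ioi 0) with hμ
  set e : ℝ → ℂ := fun x => Complex.exp (-(Complex.I * ξ * x)) with he
  have hnorm_e : ∀ x : ℝ, ‖e x‖ = 1 := fun x => by
    simp [he, Complex.norm_exp]
  set F : ℝ → ℝ → ℂ := fun y x => e x * (f x - f (x - ε * y)) with hFdef
  have he_cont : Continuous e := by
    rw [he]; continuity
  have hcont : Continuous (Function.uncurry F) := by
    apply Continuous.mul
    · exact he_cont.comp continuous_snd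
    · fun_prop
  have hInt1 : Integrable (fun x => e x * f x) volume :=
    f.integrable.bdd_mul he_cont.aestronglyMeasurable (Filter.Eventually.of_forall fun x => le_of_eq (hnorm_e x))
  have hTrans : ∀ c : ℝ, Integrable (fun x => e x * f (x - c)) volume := fun c =>
    (f.integrable.comp_sub_right c).bdd_mul he_cont.aestronglyMeasurable (Filter.Eventually.of_forall fun x => le_of_eq (hnorm_e x))
  have hFy : ∀ y : ℝ, Integrable (F y) volume := by
    intro y
    have : F y = fun x => e x * f x - e x * f (x - ε * y) := by
      funext x; simp [hFdef, mul_sub]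
    rw [this]; exact hInt1.sub (hTrans _)
  obtain ⟨C, hCpos, hC⟩ := fm_deriv_bound f
  set N := ∫ x : ℝ, ‖f x‖ with hN
  have hN0 : 0 ≤ N := integral_nonneg fun x => norm_nonneg _
  set I1 := ∫ x : ℝ, (1 + x ^ 2)⁻¹ with hI1
  have hI10 : 0 ≤ I1 := integral_nonneg fun x => by positivity
  set K := 3 * C * I1 + 2 * N with hK
  have hnormF : ∀ y x : ℝ, ‖F y x‖ = ‖f x - f (x - ε * y)‖ := fun y x => by
    rw [hFdef]; rw [norm_mul, hnorm_e, one_mul]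
  have hKbound : ∀ y ∈ Ioi (0:ℝ), (∫ x : ℝ, ‖F y x‖) ≤ K * min 1 y := by
    intro y hy
    have hy0 : (0:ℝ) < y := hy
    rcases le_or_gt y 1 with h1 | h1
    · have hmin : min 1 y = y := min_eq_right h1
      have hb : ∀ x : ℝ, ‖F y x‖ ≤ (3 * C * y) * (1 + x ^ 2)⁻¹ := by
        intro x
        rw [hnormF]
        have hay : |ε * y| ≤ 1 := by
          rw [abs_mul, hε, one_mul, abs_of_pos hy0]; exact h1
        have := fm_mvt_bound f hCpos hC x hay
        rw [abs_mul, hε, one_mul, abs_of_pos hy0] at this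
        refine this.trans (le_of_eq ?_)
        field_simp
      have hle := integral_mono ((hFy y).norm)
        ((integrable_inv_one_add_sq).const_mul (3 * C * y)) hb
      rw [integral_const_mul] at hle
      rw [hmin]
      calc (∫ x : ℝ, ‖F y x‖) ≤ 3 * C * y * I1 := hle
        _ ≤ K * y := by rw [hK]; nlinarith
    · have hmin : min 1 y = 1 := min_eq_left h1.le
      have hb : ∀ x : ℝ, ‖F y x‖ ≤ ‖f x‖ + ‖f (x - ε * y)‖ := by
        intro x; rw [hnormF]; exact norm_sub_le _ _
      have hintb : Integrable (fun x : ℝ => ‖f x‖ + ‖f (x - ε * y)‖) volume :=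
        f.integrable.norm.add ((f.integrable.comp_sub_right (ε * y)).norm)
      have hle := integral_mono ((hFy y).norm) hintb hb
      rw [integral_add f.integrable.norm ((f.integrable.comp_sub_right (ε * y)).norm),
        integral_sub_right_eq_self (fun x : ℝ => ‖f x‖) (ε * y)] at hle
      rw [hmin]
      calc (∫ x : ℝ, ‖F y x‖) ≤ N + N := hle
        _ ≤ K * 1 := by rw [hK]; nlinarith
  have hIntFnorm : Integrable (fun y => ∫ x : ℝ, ‖F y x‖) μ := by
    refine Integrable.mono' (hLev.const_mul K) ?_ ?_
    · exact ((hcont.norm.stronglyMeasurable).integral_prod_right').aestronglyMeasurable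
    · filter_upwards [self_mem_ae_restrict measurableSet_Ioi] with y hy
      rw [Real.norm_of_nonneg (integral_nonneg fun x => norm_nonneg _)]
      exact hKbound y hy
  have hF_int : Integrable (Function.uncurry F) (μ.prod volume) := by
    rw [integrable_prod_iff hcont.aestronglyMeasurable]
    exact ⟨Filter.Eventually.of_forall fun y => hFy y, hIntFnorm⟩
  have inner_eq : ∀ y : ℝ, (∫ x : ℝ, F y x) =
      (1 - Complex.exp (-(Complex.I * ξ * (ε * y)))) * ∫ x : ℝ, e x * f x := by
    intro y
    have hsplit : (∫ x : ℝ, F y x) =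
        (∫ x : ℝ, e x * f x) - ∫ x : ℝ, e x * f (x - ε * y) := by
      rw [show (fun x : ℝ => F y x) = fun x : ℝ => e x * f x - e x * f (x - ε * y) from
        funext fun x => by simp [hFdef, mul_sub]]
      exact integral_sub hInt1 (hTrans _)
    have htrans : (∫ x : ℝ, e x * f (x - ε * y)) =
        Complex.exp (-(Complex.I * ξ * (ε * y))) * ∫ x : ℝ, e x * f x := by
      have hstep : (fun x : ℝ => e x * f (x - ε * y)) =
          fun x : ℝ => (fun u : ℝ =>
            Complex.exp (-(Complex.I * ξ * (↑u + ↑(ε * y)))) * f u) (x - ε * y) := by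
        funext x
        simp only [he]
        congr 3
        push_cast
        ring
      rw [hstep, integral_sub_right_eq_self
        (fun u : ℝ => Complex.exp (-(Complex.I * ξ * (↑u + ↑(ε * y)))) * f u) (ε * y)]
      have hsplit2 : ∀ u : ℝ, Complex.exp (-(Complex.I * ξ * (↑u + ↑(ε * y)))) * f u =
          Complex.exp (-(Complex.I * ξ * (ε * y))) * (e u * f u) := by
        intro u
        rw [he, ← mul_assoc, ← Complex.exp_add]
        congr 2
        push_cast
        ring
      simp_rw [hsplit2]
      rw [integral_const_mul]
    rw [hsplit, htrans]
    ring
  calc ∫ x : ℝ, e x * ∫ y, (f x - f (x - ε * y)) ∂μ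
      = ∫ x : ℝ, ∫ y, F y x ∂μ := by
        simp_rw [hFdef, MeasureTheory.integral_const_mul]
    _ = ∫ y, (∫ x : ℝ, F y x) ∂μ := (MeasureTheory.integral_integral_swap hF_int).symm
    _ = ∫ y, (1 - Complex.exp (-(Complex.I * ξ * (ε * y)))) * (∫ x : ℝ, e x * f x) ∂μ := by
        simp_rw [inner_eq]
    _ = (∫ y, (1 - Complex.exp (-(Complex.I * ξ * (ε * y)))) ∂μ) * ∫ x : ℝ, e x * f x := by
        simp_rw [← smul_eq_mul (α := ℂ)]
        rw [integral_smul_const]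

/-- Fourier transforms of the left and right Marchaud-type derivatives of a Schwartz
function: `Φ(iξ) f̂(ξ)` and `Φ(−iξ) f̂(ξ)` respectively. -/
theorem fourier_marchaud_type
    (Lev : Measure ℝ)
    (hLev : IntegrableOn (fun z => min 1 z) (Ioi 0) Lev)
    (Φ : ℂ → ℂ)
    (hΦ : ∀ z : ℂ, 0 ≤ z.re →
      Φ z = ∫ y in Ioi (0:ℝ), (1 - Complex.exp (-(z * y))) ∂Lev)
    (f : SchwartzMap ℝ ℂ) (ξ : ℝ) :
    (∫ x : ℝ, Complex.exp (-(Complex.I * ξ * x)) *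
        (∫ y in Ioi (0:ℝ), (f x - f (x - y)) ∂Lev) =
      Φ (Complex.I * ξ) * ∫ x : ℝ, Complex.exp (-(Complex.I * ξ * x)) * f x) ∧
    (∫ x : ℝ, Complex.exp (-(Complex.I * ξ * x)) *
        (∫ y in Ioi (0:ℝ), (f x - f (x + y)) ∂Lev) =
      Φ (-(Complex.I * ξ)) * ∫ x : ℝ, Complex.exp (-(Complex.I * ξ * x)) * f x) := by
  constructor
  · have h := fm_aux Lev hLev f ξ 1 (by norm_num)
    simp only [Complex.ofReal_one, one_mul] at h
    rw [hΦ (Complex.I * ξ) (by simp)]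
    exact h
  · have h := fm_aux Lev hLev f ξ (-1) (by norm_num)
    simp only [Complex.ofReal_neg, Complex.ofReal_one, neg_one_mul, sub_neg_eq_add,
      mul_neg, neg_neg] at h
    rw [hΦ (-(Complex.I * ξ)) (by simp)]
    rw [h]
    congr 1
    refine integral_congr_ae (Filter.Eventually.of_forall fun y => ?_)
    simp only [neg_mul, mul_neg, neg_neg, mul_assoc]
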